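/- Let a > 0, t0 = (a+1)/a, T0 = (a+1)^2/a, and let M3 be the 3×3 real matrix with rows (1, a+1, −(a+1)), (−1, 0, 0), (1/a, t0, 0). Then the eigenvalues of M3, regarded as a matrix over ℂ, are exactly 1, i·√T0 and −i·√T0; the two nonreal eigenvalues have absolute value √T0, and T0 = (a+1)^2/a ≥ 4 > 1, so both nonreal eigenvalues lie strictly outside the unit circle. -/

import Mathlib

/-- for `M3` the 3×3 matrix (over `ℂ`) with rows `(1, a+1, -(a+1))`,
`(-1, 0, 0)`, `(1/a, t0, 0)`, the eigenvalues (the spectrum) are exactly `1`,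
`i√T0` and `-i√T0`; the two nonreal eigenvalues have absolute value `√T0`, and
`T0 = (a+1)²/a ≥ 4 > 1`, so both nonreal eigenvalues lie strictly outside the
unit circle. -/
theorem stmt_17 (a : ℝ) (ha : 0 < a) (t0 T0 : ℝ)
    (ht0 : t0 = (a + 1) / a) (hT0 : T0 = (a + 1) ^ 2 / a)
    (M3 : Matrix (Fin 3) (Fin 3) ℂ)
    (hM3 : M3 = !![1, (a : ℂ) + 1, -((a : ℂ) + 1); -1, 0, 0;
                   1 / (a : ℂ), (t0 : ℂ), 0]) :
    spectrum ℂ M3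
        = {1, Complex.I * (Real.sqrt T0 : ℂ), -(Complex.I * (Real.sqrt T0 : ℂ))} ∧
    ‖Complex.I * (Real.sqrt T0 : ℂ)‖ = Real.sqrt T0 ∧
    ‖-(Complex.I * (Real.sqrt T0 : ℂ))‖ = Real.sqrt T0 ∧
    4 ≤ T0 ∧ (1 : ℝ) < 4 ∧
    1 < ‖Complex.I * (Real.sqrt T0 : ℂ)‖ ∧
    1 < ‖-(Complex.I * (Real.sqrt T0 : ℂ))‖ := by
  have ha' : (a : ℂ) ≠ 0 := by exact_mod_cast ha.ne'
  have hT0pos : 0 < T0 := by rw [hT0]; positivity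
  have hT04 : 4 ≤ T0 := by
    rw [hT0, le_div_iff₀ ha]
    nlinarith [sq_nonneg (a - 1)]
  set s : ℂ := (Real.sqrt T0 : ℂ) with hs
  have hsq : s ^ 2 = (T0 : ℂ) := by
    rw [hs, ← Complex.ofReal_pow, Real.sq_sqrt hT0pos.le]
  have habs : ‖Complex.I * s‖ = Real.sqrt T0 := by
    simp [hs, abs_of_nonneg (Real.sqrt_nonneg T0)]
  have hgt : 1 < Real.sqrt T0 := by
    have := Real.sqrt_lt_sqrt (by norm_num : (0:ℝ) ≤ 1)
      (lt_of_lt_of_le (by norm_num : (1:ℝ) < 4) hT04)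
    simpa using this
  refine ⟨?_, habs, by simpa using habs, hT04, by norm_num, by rw [habs]; exact hgt,
    by rw [norm_neg, habs]; exact hgt⟩
  ext μ
  rw [spectrum.mem_iff, Matrix.isUnit_iff_isUnit_det, isUnit_iff_ne_zero, not_not]
  have hmat : (algebraMap ℂ (Matrix (Fin 3) (Fin 3) ℂ)) μ - M3 =
      !![μ - 1, -((a:ℂ)+1), (a:ℂ)+1; 1, μ, 0; -(1/(a:ℂ)), -(t0:ℂ), μ] := by
    rw [hM3]
    ext i j
    fin_cases i <;> fin_cases j <;>
      simp [Matrix.algebraMap_matrix_apply, Matrix.one_apply, Matrix.vecHead, Matrix.vecTail]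
  have ht0c : (t0 : ℂ) = ((a:ℂ) + 1) / (a:ℂ) := by rw [ht0]; push_cast; ring
  have hT0c : (T0 : ℂ) = ((a:ℂ) + 1) ^ 2 / (a:ℂ) := by rw [hT0]; push_cast; ring
  have hdet : ((algebraMap ℂ (Matrix (Fin 3) (Fin 3) ℂ)) μ - M3).det
      = (μ - 1) * (μ - Complex.I * s) * (μ + Complex.I * s) := by
    rw [hmat, Matrix.det_fin_three]
    have hstep : (μ - 1) * (μ - Complex.I * s) * (μ + Complex.I * s)
        = (μ - 1) * (μ ^ 2 + (T0 : ℂ)) := by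
      linear_combination (μ - 1) * hsq - (μ - 1) * s ^ 2 * Complex.I_sq
    rw [hstep]
    simp only [Matrix.of_apply, Matrix.cons_val', Matrix.cons_val_zero, Matrix.cons_val_one,
      Matrix.cons_val_two, Matrix.empty_val', Matrix.cons_val_fin_one,
      Matrix.vecHead, Matrix.vecTail, Matrix.cons_val_succ, Function.comp]
    field_simp
    have ht0m : (t0:ℂ) * (a:ℂ) = (a:ℂ) + 1 := by rw [ht0c]; field_simp
    have hT0m : (T0:ℂ) * (a:ℂ) = ((a:ℂ) + 1) ^ 2 := by rw [hT0c]; field_simp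
    linear_combination (-(((a:ℂ)+1))) * ht0m + (1 - μ) * hT0m
  rw [hdet]
  simp only [Set.mem_insert_iff, Set.mem_singleton_iff, mul_eq_zero, sub_eq_zero,
    add_eq_zero_iff_eq_neg]
  tauto
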